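/- Let 1 ≤ m, let a ≥ 1 and 0 ≤ r ≤ m, and set n = a(m+1) + 1 + r. In the circulant digraph D(n,[m]) (arcs i → i−1 and i → i+k for k ∈ {1,…,m}, modulo n), the out-transmission of every vertex v satisfies σ⁺(v) = (m+1)·C(a+1, 2) + r(a+1), where C(a+1,2) = (a+1)a/2, and the in-transmission σ⁻(v) equals the same value. -/
import Mathlib

/-- A directed walk of length `n` from `u` to `v` along the arc relation `A`. -/
def DWalk {V : Type*} (A : V → V → Prop) : ℕ → V → V → Prop
  | 0, u, v => u = v
  | n+1, u, v => ∃ w, A u w ∧ DWalk A n w v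

/-- Directed distance: length of a shortest directed path (`⊤` if none exists). -/
noncomputable def ddist {V : Type*} (A : V → V → Prop) (u v : V) : ℕ∞ :=
  sInf {k : ℕ∞ | ∃ n : ℕ, k = n ∧ DWalk A n u v}

/-- The arc relation of the circulant digraph `D(n,S)`. -/
def circArc (n : ℕ) (S : Set ℕ) : ZMod n → ZMod n → Prop :=
  fun i j => j - i = -1 ∨ ∃ k ∈ S, j - i = (k : ZMod n)

section walks
variable {n m : ℕ} [NeZero n]

lemma dwalk_forward (hm : 1 ≤ m) :
    ∀ k t : ℕ, k ≤ t → t ≤ k * m → ∀ u : ZMod n,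
      DWalk (circArc n (Set.Icc 1 m)) k u (u + t) := by
  intro k
  induction k with
  | zero =>
      intro t h1 h2 u
      have : t = 0 := by omega
      subst this; simp [DWalk]
  | succ k ih =>
      intro t h1 h2 u
      have hmul : (k + 1) * m = k * m + m := by ring
      have hkm : k ≤ k * m := Nat.le_mul_of_pos_right k hm
      obtain ⟨s, hs1, hsm, hst, h1', h2'⟩ :
          ∃ s, 1 ≤ s ∧ s ≤ m ∧ s ≤ t ∧ k ≤ t - s ∧ t - s ≤ k * m := by
        rcases le_or_gt (k + m) t with h | h
        · exact ⟨m, hm, le_refl _, by omega, by omega, by omega⟩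
        · exact ⟨t - k, by omega, by omega, by omega, by omega, by omega⟩
      refine ⟨u + (s : ℕ), Or.inr ⟨s, ⟨hs1, hsm⟩, by ring⟩, ?_⟩
      have hcast : ((t - s : ℕ) : ZMod n) = (t : ZMod n) - (s : ℕ) := by
        push_cast [Nat.cast_sub hst]; ring
      have key : u + (t : ZMod n) = (u + (s : ℕ)) + ((t - s : ℕ) : ZMod n) := by
        rw [hcast]; ring
      rw [key]
      exact ih (t - s) h1' h2' _

omit [NeZero n] in
lemma dwalk_backward :
    ∀ k : ℕ, ∀ u : ZMod n, DWalk (circArc n (Set.Icc 1 m)) k u (u - k) := by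
  intro k
  induction k with
  | zero => intro u; simp [DWalk]
  | succ k ih =>
      intro u
      refine ⟨u - 1, Or.inl (by ring), ?_⟩
      have key : u - ((k + 1 : ℕ) : ZMod n) = (u - 1) - (k : ℕ) := by
        push_cast; ring
      rw [key]
      exact ih _

omit [NeZero n] in
lemma dwalk_bound (hm : 1 ≤ m) :
    ∀ k : ℕ, ∀ u w : ZMod n, DWalk (circArc n (Set.Icc 1 m)) k u w →
      ∃ S : ℤ, -(k : ℤ) ≤ S ∧ S ≤ k * m ∧ w - u = (S : ZMod n) := by
  intro k
  induction k with
  | zero => intro u w h; exact ⟨0, by simp, by simp, by rw [h]; simp⟩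
  | succ k ih =>
      intro k' w h
      obtain ⟨x, hx, hw⟩ := h
      obtain ⟨S, hS1, hS2, hS3⟩ := ih x w hw
      have hm' : (1 : ℤ) ≤ m := by exact_mod_cast hm
      have hk0 : (0 : ℤ) ≤ k := by positivity
      rcases hx with h1 | ⟨s, ⟨hs1, hs2⟩, h1⟩
      · refine ⟨S - 1, by push_cast; omega, by push_cast; nlinarith, ?_⟩
        have : w - k' = (x - k') + (w - x) := by ring
        rw [this, h1, hS3]; push_cast; ring
      · have hs1' : (1 : ℤ) ≤ s := by exact_mod_cast hs1
        have hs2' : (s : ℤ) ≤ m := by exact_mod_cast hs2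
        refine ⟨S + s, by push_cast; omega, by push_cast; nlinarith, ?_⟩
        have : w - k' = (x - k') + (w - x) := by ring
        rw [this, h1, hS3]; push_cast; ring

lemma ddist_eq (hm : 1 ≤ m) (u w : ZMod n) :
    ddist (circArc n (Set.Icc 1 m)) u w =
      ((min (((w - u).val + m - 1) / m) (n - (w - u).val) : ℕ) : ℕ∞) := by
  set t := (w - u).val with ht
  have htn : t < n := ZMod.val_lt _
  have hw : w = u + (t : ℕ) := by
    have : ((t : ℕ) : ZMod n) = w - u := ZMod.natCast_rightInverse _
    rw [this]; ring
  have hm0 : 0 < m := hm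
  set k₁ := (t + m - 1) / m with hk₁
  have hdm := Nat.div_add_mod (t + m - 1) m
  have hmod := Nat.mod_lt (t + m - 1) hm0
  apply le_antisymm
  · -- upper bound: sInf ≤ min
    have hA : ddist (circArc n (Set.Icc 1 m)) u w ≤ (k₁ : ℕ∞) := by
      apply sInf_le
      refine ⟨k₁, rfl, ?_⟩
      rw [hw]
      apply dwalk_forward hm
      · -- k₁ ≤ t
        rcases Nat.eq_zero_or_pos t with h | h
        · have hk0 : (t + m - 1) / m = 0 := Nat.div_eq_of_lt (by omega)
          omega
        · have hmul : (t + 1) * m = t * m + m := by ring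
          have htt : t ≤ t * m := Nat.le_mul_of_pos_right t hm0
          have h1 : t + m - 1 < (t + 1) * m := by omega
          have := (Nat.div_lt_iff_lt_mul hm0).mpr h1
          omega
      · -- t ≤ k₁ * m
        have hdm' : k₁ * m = m * ((t + m - 1) / m) := by rw [hk₁]; ring
        omega
    have hB : ddist (circArc n (Set.Icc 1 m)) u w ≤ ((n - t : ℕ) : ℕ∞) := by
      apply sInf_le
      refine ⟨n - t, rfl, ?_⟩
      have : w = u - ((n - t : ℕ) : ZMod n) := by
        rw [hw, Nat.cast_sub htn.le]
        simp
      rw [this]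
      exact dwalk_backward _ u
    rcases le_total k₁ (n - t) with h | h
    · rw [min_eq_left h]; exact hA
    · rw [min_eq_right h]; exact hB
  · -- lower bound
    apply le_sInf
    rintro b ⟨k, rfl, hwalk⟩
    rw [Nat.cast_le]
    obtain ⟨S, hS1, hS2, hS3⟩ := dwalk_bound hm k u w hwalk
    have hSt : ((S : ℤ) : ZMod n) = ((t : ℤ) : ZMod n) := by
      rw [← hS3]
      rw [hw]; push_cast; ring
    have hdvd : (n : ℤ) ∣ t - S := ((ZMod.intCast_eq_intCast_iff _ _ _).mp hSt).dvd
    obtain ⟨j, hj⟩ := hdvd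
    have hcase : (t : ℤ) ≤ S ∨ S ≤ (t : ℤ) - n := by
      rcases le_or_gt j 0 with h | h
      · have : (n : ℤ) * j ≤ 0 := mul_nonpos_of_nonneg_of_nonpos (by positivity) h
        left; omega
      · have : (n : ℤ) ≤ n * j := le_mul_of_one_le_right (by positivity) (by omega)
        right; omega
    rcases hcase with h | h
    · have htk : (t : ℤ) ≤ (k : ℤ) * m := le_trans h hS2
      have htk' : t ≤ k * m := by exact_mod_cast htk
      have : k₁ ≤ k := by
        have hmul2 : (k + 1) * m = k * m + m := by ring
        have h1 : t + m - 1 < (k + 1) * m := by omega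
        have := (Nat.div_lt_iff_lt_mul hm0).mpr h1
        omega
      omega
    · have : (n : ℤ) - t ≤ k := by omega
      have : n - t ≤ k := by omega
      omega

end walks

open Finset

lemma ceil_sum {m r : ℕ} (hm : 1 ≤ m) (hr : r ≤ m) :
    ∀ a : ℕ, ∑ t ∈ range (a * m + r + 1), (t + m - 1) / m
      = m * (a + 1).choose 2 + r * (a + 1) := by
  intro a
  induction a with
  | zero =>
      simp only [Nat.zero_mul, Nat.zero_add]
      rw [Finset.sum_range_succ']
      have h0 : (0 + m - 1) / m = 0 := Nat.div_eq_of_lt (by omega)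
      rw [h0]
      have : ∀ i ∈ range r, (i + 1 + m - 1) / m = 1 := by
        intro i hi
        rw [Finset.mem_range] at hi
        exact Nat.div_eq_of_lt_le (by omega) (by omega)
      rw [Finset.sum_congr rfl this]
      simp [Nat.choose]
  | succ a ih =>
      have hmul1 : (a + 1) * m = a * m + m := by ring
      have hmul2 : (a + 2) * m = a * m + m + m := by ring
      have hmul3 : (a + 3) * m = a * m + m + m + m := by ring
      have hmul2' : (a + 1 + 1) * m = a * m + m + m := by ring
      have hmul3' : (a + 2 + 1) * m = a * m + m + m + m := by ring
      have h1 : a * m + r + 1 ≤ (a + 1) * m + 1 := by omega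
      have h2 : (a + 1) * m + 1 ≤ (a + 1) * m + r + 1 := by omega
      have hsplit : ∑ t ∈ Finset.Ico (a * m + r + 1) ((a + 1) * m + r + 1), (t + m - 1) / m
          = (m - r) * (a + 1) + r * (a + 2) := by
        rw [← Finset.sum_Ico_consecutive _ h1 h2]
        have e1 : ∀ t ∈ Finset.Ico (a * m + r + 1) ((a + 1) * m + 1), (t + m - 1) / m = a + 1 := by
          intro t ht
          rw [Finset.mem_Ico] at ht
          exact Nat.div_eq_of_lt_le (by omega) (by omega)
        have e2 : ∀ t ∈ Finset.Ico ((a + 1) * m + 1) ((a + 1) * m + r + 1),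
            (t + m - 1) / m = a + 2 := by
          intro t ht
          rw [Finset.mem_Ico] at ht
          exact Nat.div_eq_of_lt_le (by omega) (by omega)
        rw [Finset.sum_congr rfl e1, Finset.sum_congr rfl e2, Finset.sum_const, Finset.sum_const,
          Nat.card_Ico, Nat.card_Ico, smul_eq_mul, smul_eq_mul]
        have h3 : (a + 1) * m + 1 - (a * m + r + 1) = m - r := by omega
        have h4 : (a + 1) * m + r + 1 - ((a + 1) * m + 1) = r := by omega
        rw [h3, h4]
      have hle : a * m + r + 1 ≤ (a + 1) * m + r + 1 := by omega
      rw [Finset.range_eq_Ico, ← Finset.sum_Ico_consecutive _ (Nat.zero_le (a * m + r + 1)) hle,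
        ← Finset.range_eq_Ico, ih, hsplit]
      have hch : (a + 2).choose 2 = (a + 1) + (a + 1).choose 2 := by
        rw [Nat.choose_succ_succ, Nat.choose_one_right]
      rw [hch]
      obtain ⟨d, hd⟩ : ∃ d, m = r + d := ⟨m - r, by omega⟩
      subst hd
      rw [Nat.add_sub_cancel_left]
      ring

lemma gauss_choose (a : ℕ) : ∑ i ∈ range a, (i + 1) = (a + 1).choose 2 := by
  have h1 : ∑ i ∈ range (a + 1), i = ∑ i ∈ range a, (i + 1) + 0 := Finset.sum_range_succ' id a
  have h2 := Finset.sum_range_id_mul_two (a + 1)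
  have h3 : (a + 1).choose 2 = (a + 1) * (a + 1 - 1) / 2 := Nat.choose_two_right _
  have h4 : (a + 1) * (a + 1 - 1) = (a + 1) * a := by norm_num
  omega

lemma sum_min {m a r n : ℕ} (hm : 1 ≤ m) (ha : 1 ≤ a) (hr : r ≤ m)
    (hn : n = a * (m + 1) + 1 + r) :
    ∑ t ∈ range n, min ((t + m - 1) / m) (n - t)
      = (m + 1) * (a + 1).choose 2 + r * (a + 1) := by
  have hm0 : 0 < m := hm
  have hmul : a * (m + 1) = a * m + a := by ring
  have hmul2 : (a + 2) * m = a * m + m + m := by ring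
  have hmul1 : (a + 1) * m = a * m + m := by ring
  set B := a * m + r + 1 with hB
  have hBn : B ≤ n := by omega
  have e1 : ∀ t ∈ range B, min ((t + m - 1) / m) (n - t) = (t + m - 1) / m := by
    intro t ht
    rw [Finset.mem_range] at ht
    apply min_eq_left
    have hk : (t + m - 1) / m ≤ a + 1 := by
      have : t + m - 1 < (a + 2) * m := by omega
      have := (Nat.div_lt_iff_lt_mul hm0).mpr this
      omega
    omega
  have e2 : ∀ t ∈ Finset.Ico B n, min ((t + m - 1) / m) (n - t) = n - t := by
    intro t ht
    rw [Finset.mem_Ico] at ht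
    apply min_eq_right
    have hk : a + 1 ≤ (t + m - 1) / m := by
      rw [Nat.le_div_iff_mul_le hm0]
      omega
    omega
  rw [Finset.range_eq_Ico, ← Finset.sum_Ico_consecutive _ (Nat.zero_le B) hBn,
    ← Finset.range_eq_Ico, Finset.sum_congr rfl e1, Finset.sum_congr rfl e2,
    ceil_sum hm hr a]
  have hnB : n - B = a := by omega
  have hIco : ∑ t ∈ Finset.Ico B n, (n - t) = (a + 1).choose 2 := by
    rw [Finset.sum_Ico_eq_sum_range, hnB]
    have e3 : ∀ i ∈ range a, n - (B + i) = a - 1 - i + 1 := by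
      intro i hi; rw [Finset.mem_range] at hi; omega
    rw [Finset.sum_congr rfl e3, Finset.sum_range_reflect (fun i => i + 1) a]
    exact gauss_choose a
  rw [hIco]
  ring

lemma zmod_sum_val {n : ℕ} [NeZero n] {M : Type*} [AddCommMonoid M] (h : ℕ → M) :
    ∑ w : ZMod n, h w.val = ∑ t ∈ range n, h t := by
  apply Finset.sum_nbij' (i := fun w => w.val) (j := fun t => ((t : ℕ) : ZMod n))
  · intro w _; exact Finset.mem_range.mpr (ZMod.val_lt w)
  · intro t _; exact Finset.mem_univ _
  · intro w _; exact ZMod.natCast_rightInverse w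
  · intro t ht; exact ZMod.val_cast_of_lt (Finset.mem_range.mp ht)
  · intro w _; rfl

theorem stmt8 (m a r n : ℕ) (hm : 1 ≤ m) (ha : 1 ≤ a) (hr : r ≤ m)
    (hn : n = a * (m + 1) + 1 + r) [NeZero n] (v : ZMod n) :
    (∑ u : ZMod n, ddist (circArc n (Set.Icc 1 m)) v u) =
      ((m + 1) * (a + 1).choose 2 + r * (a + 1) : ℕ) ∧
    (∑ u : ZMod n, ddist (circArc n (Set.Icc 1 m)) u v) =
      ((m + 1) * (a + 1).choose 2 + r * (a + 1) : ℕ) := by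
  have key : ∑ w : ZMod n, ((min ((w.val + m - 1) / m) (n - w.val) : ℕ) : ℕ∞)
      = (((m + 1) * (a + 1).choose 2 + r * (a + 1) : ℕ) : ℕ∞) := by
    rw [zmod_sum_val (fun t => ((min ((t + m - 1) / m) (n - t) : ℕ) : ℕ∞))]
    rw [← Nat.cast_sum]
    rw [sum_min hm ha hr hn]
  constructor
  · calc ∑ u : ZMod n, ddist (circArc n (Set.Icc 1 m)) v u
        = ∑ u : ZMod n, ((min (((u - v).val + m - 1) / m) (n - (u - v).val) : ℕ) : ℕ∞) :=
          Finset.sum_congr rfl (fun u _ => ddist_eq hm v u)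
      _ = ∑ w : ZMod n, ((min ((w.val + m - 1) / m) (n - w.val) : ℕ) : ℕ∞) :=
          Fintype.sum_equiv (Equiv.subRight v) _ _ (fun u => by simp)
      _ = _ := key
  · calc ∑ u : ZMod n, ddist (circArc n (Set.Icc 1 m)) u v
        = ∑ u : ZMod n, ((min (((v - u).val + m - 1) / m) (n - (v - u).val) : ℕ) : ℕ∞) :=
          Finset.sum_congr rfl (fun u _ => ddist_eq hm u v)
      _ = ∑ w : ZMod n, ((min ((w.val + m - 1) / m) (n - w.val) : ℕ) : ℕ∞) :=
          Fintype.sum_equiv (Equiv.subLeft v) _ _ (fun u => by simp)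
      _ = _ := key
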